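/- Let n ≥ 2 and let A ∈ ℝ^{n×n} be symmetric nonnegative definite with Hadamard power rank h_A. Then for every integer d ≥ max{h_A − 1, 1}, the rank of the d-th Hadamard power satisfies rank(A^∘d) = h_A. -/

import Mathlib

open Matrix Finset Module Submodule



namespace HadPowAux

variable {n : ℕ}

/-- The `d`-fold coordinate-product ("tensor power") of a vector. -/
def pw (d : ℕ) (v : Fin n → ℝ) : (Fin d → Fin n) → ℝ := fun f => ∏ k, v (f k)

lemma pw_smul (d : ℕ) (c : ℝ) (v : Fin n → ℝ) : pw d (c • v) = c ^ d • pw d v := by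
  funext f
  simp only [pw, Pi.smul_apply, smul_eq_mul, Finset.prod_mul_distrib, Finset.prod_const,
    Finset.card_univ, Fintype.card_fin]

lemma pw_zero (d : ℕ) (hd : 1 ≤ d) : pw d (0 : Fin n → ℝ) = 0 := by
  funext f
  exact Finset.prod_eq_zero (Finset.mem_univ (⟨0, hd⟩ : Fin d)) rfl

lemma pw_ne_zero (d : ℕ) {v : Fin n → ℝ} (hv : v ≠ 0) : pw d v ≠ 0 := by
  obtain ⟨m, hm⟩ : ∃ m, v m ≠ 0 := by
    by_contra hc; push_neg at hc; exact hv (funext hc)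
  intro h0
  have := congrFun h0 (fun _ => m)
  simp only [pw, Finset.prod_const, Pi.zero_apply, Finset.card_univ, Fintype.card_fin] at this
  exact pow_ne_zero d hm this

lemma pw_eq_zero_single (d : ℕ) {v : Fin n → ℝ} (hv : v ≠ 0) {c : ℝ}
    (h : c • pw d v = 0) : c = 0 := by
  by_contra hc
  exact pw_ne_zero d hv (by simpa [hc] using (smul_eq_zero.mp h))

lemma pw_cons (e : ℕ) (v : Fin n → ℝ) (m : Fin n) (g : Fin e → Fin n) :
    pw (e + 1) v (Fin.cons m g) = v m * pw e v g := by
  simp [pw, Fin.prod_univ_succ]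

end HadPowAux
namespace HadPowAux

lemma exists_good {ι : Type*} [DecidableEq ι] {v₀ : Fin n → ℝ} (hv₀ : v₀ ≠ 0)
    (t : Finset ι) (z : ι → Fin n → ℝ) (hz : ∀ i ∈ t, ∀ a : ℝ, z i ≠ a • v₀) :
    ∃ u : Fin n → ℝ, u ⬝ᵥ v₀ = 0 ∧ ∀ i ∈ t, u ⬝ᵥ z i ≠ 0 := by
  induction t using Finset.induction_on with
  | empty => exact ⟨0, by simp, by simp⟩
  | @insert a t ha ih =>
    obtain ⟨u, hu0, hut⟩ := ih (fun i hi => hz i (Finset.mem_insert_of_mem hi))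
    have hvv : v₀ ⬝ᵥ v₀ ≠ 0 := fun hc => hv₀ (dotProduct_self_eq_zero.mp hc)
    set p : Fin n → ℝ := z a - ((z a ⬝ᵥ v₀) / (v₀ ⬝ᵥ v₀)) • v₀ with hp
    have hpv₀ : p ⬝ᵥ v₀ = 0 := by
      simp [hp, sub_dotProduct, smul_dotProduct, div_mul_cancel₀ _ hvv]
    have hpne : p ≠ 0 := by
      intro hc
      apply hz a (Finset.mem_insert_self a t) ((z a ⬝ᵥ v₀) / (v₀ ⬝ᵥ v₀))
      have := sub_eq_zero.mp (hp ▸ hc)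
      exact this
    have hpza : p ⬝ᵥ z a ≠ 0 := by
      have h1 : p ⬝ᵥ z a = p ⬝ᵥ p := by
        have : z a = p + ((z a ⬝ᵥ v₀) / (v₀ ⬝ᵥ v₀)) • v₀ := by rw [hp]; ring
        rw [this]
        simp [dotProduct_add, dotProduct_smul, hpv₀]
      rw [h1]
      exact fun hc => hpne (dotProduct_self_eq_zero.mp hc)
    -- choose c avoiding finitely many bad values
    obtain ⟨c, hc⟩ := Infinite.exists_notMem_finset
      ((insert a t).image (fun i => -(u ⬝ᵥ z i) / (p ⬝ᵥ z i)))
    refine ⟨u + c • p, by simp [add_dotProduct, smul_dotProduct, hu0, hpv₀], ?_⟩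
    intro i hi
    have hbad : c ≠ -(u ⬝ᵥ z i) / (p ⬝ᵥ z i) := fun hcc =>
      hc (Finset.mem_image.mpr ⟨i, hi, hcc.symm⟩)
    rw [add_dotProduct, smul_dotProduct]
    rcases Finset.mem_insert.mp hi with rfl | hit
    · intro hzero
      apply hbad
      rw [eq_div_iff hpza]; simp only [smul_eq_mul] at hzero
      linarith [hzero]
    · by_cases hpzi : p ⬝ᵥ z i = 0
      · simpa [hpzi, smul_eq_mul] using hut i hit
      · intro hzero
        apply hbad
        rw [eq_div_iff hpzi]; simp only [smul_eq_mul] at hzero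
        linarith [hzero]

end HadPowAux

namespace HadPowAux

lemma key {ι : Type*} [DecidableEq ι] : ∀ (N : ℕ) (t : Finset ι) (d : ℕ)
    (v : ι → Fin n → ℝ) (c : ι → ℝ), t.card ≤ N → t.card ≤ d + 1 →
    (∀ i ∈ t, v i ≠ 0) →
    (∀ i ∈ t, ∀ j ∈ t, i ≠ j → ∀ a b : ℝ, a • v i + b • v j = 0 → a = 0 ∧ b = 0) →
    (∑ j ∈ t, c j • pw d (v j)) = 0 → ∀ j ∈ t, c j = 0 := by
  intro N
  induction N with
  | zero =>
    intro t d v c hN _ _ _ _ j hj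
    rw [Nat.le_zero, Finset.card_eq_zero] at hN
    simp [hN] at hj
  | succ N ih =>
    intro t d v c hN hd hnz hpair hsum j hj
    by_cases h1 : t.card ≤ 1
    · have ht : t = {j} := by
        apply Finset.eq_singleton_iff_unique_mem.mpr
        refine ⟨hj, fun x hx => ?_⟩
        by_contra hne
        have : 2 ≤ t.card := Finset.one_lt_card.mpr ⟨x, hx, j, hj, hne⟩
        omega
      rw [ht, Finset.sum_singleton] at hsum
      exact pw_eq_zero_single d (hnz j hj) hsum
    · push_neg at h1
      obtain ⟨e, rfl⟩ : ∃ e, d = e + 1 := ⟨d - 1, by omega⟩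
      obtain ⟨u, hu0, hut⟩ := exists_good (hnz j hj) (t.erase j) v (by
        intro i hi a hia
        have hij : i ≠ j := Finset.ne_of_mem_erase hi
        refine one_ne_zero ((hpair i (Finset.mem_of_mem_erase hi) j hj hij 1 (-a) ?_).1)
        rw [hia, one_smul, neg_smul, add_neg_cancel])
      have He : ∀ (m : Fin n) (g : Fin e → Fin n),
          ∑ i ∈ t, c i * pw (e + 1) (v i) (Fin.cons m g) = 0 := by
        intro m g
        have := congrFun hsum (Fin.cons m g)
        simpa [Finset.sum_apply] using this
      have hcontr : (∑ i ∈ t, (c i * (u ⬝ᵥ v i)) • pw e (v i)) = 0 := by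
        funext g
        have lhs_eq : (∑ i ∈ t, (c i * (u ⬝ᵥ v i)) • pw e (v i)) g
            = ∑ i ∈ t, (c i * (u ⬝ᵥ v i)) * pw e (v i) g := by
          simp [Finset.sum_apply]
        rw [lhs_eq]
        calc ∑ i ∈ t, (c i * (u ⬝ᵥ v i)) * pw e (v i) g
            = ∑ i ∈ t, ∑ m, u m * (c i * pw (e + 1) (v i) (Fin.cons m g)) := by
              refine Finset.sum_congr rfl fun i _ => ?_
              simp_rw [pw_cons, dotProduct, Finset.mul_sum, Finset.sum_mul]
              exact Finset.sum_congr rfl fun m _ => by ring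
          _ = ∑ m, u m * ∑ i ∈ t, c i * pw (e + 1) (v i) (Fin.cons m g) := by
              rw [Finset.sum_comm]
              simp_rw [Finset.mul_sum]
          _ = 0 := by
              simp only [He, mul_zero, Finset.sum_const_zero]
      have herase : (∑ i ∈ t.erase j, (c i * (u ⬝ᵥ v i)) • pw e (v i)) = 0 := by
        have h2 := Finset.sum_erase_add t (fun i => (c i * (u ⬝ᵥ v i)) • pw e (v i)) hj
        simp only [hcontr, hu0, mul_zero, zero_smul, add_zero] at h2
        exact h2
      have hzero : ∀ i ∈ t.erase j, c i * (u ⬝ᵥ v i) = 0 := by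
        refine ih (t.erase j) e v (fun i => c i * (u ⬝ᵥ v i)) ?_ ?_ ?_ ?_ herase
        · have := Finset.card_erase_of_mem hj; omega
        · have := Finset.card_erase_of_mem hj; omega
        · exact fun i hi => hnz i (Finset.mem_of_mem_erase hi)
        · exact fun i hi k hk hik => hpair i (Finset.mem_of_mem_erase hi) k
            (Finset.mem_of_mem_erase hk) hik
      have hcz : ∀ i ∈ t.erase j, c i = 0 := fun i hi => by
        rcases mul_eq_zero.mp (hzero i hi) with h | h
        · exact h
        · exact absurd h (hut i hi)
      have hlast : c j • pw (e + 1) (v j) = 0 := by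
        have h2 := Finset.sum_erase_add t (fun i => c i • pw (e + 1) (v i)) hj
        have h0 : (∑ i ∈ t.erase j, c i • pw (e + 1) (v i)) = 0 :=
          Finset.sum_eq_zero fun i hi => by rw [hcz i hi, zero_smul]
        simp only [hsum, h0, zero_add] at h2
        exact h2
      exact pw_eq_zero_single (e + 1) (hnz j hj) hlast


lemma pair_symm {M : Type*} [AddCommGroup M] [Module ℝ M] {x y : M}
    (h : LinearIndependent ℝ ![x, y]) : LinearIndependent ℝ ![y, x] := by
  rw [LinearIndependent.pair_iff] at h ⊢
  intro s t hst
  have := h t s (by rw [add_comm]; exact hst)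
  exact ⟨this.2, this.1⟩

end HadPowAux

open HadPowAux

theorem rank_hadamard_power_eq_hadamardPowerRank (n : ℕ) (hn : 2 ≤ n)
    (A : Matrix (Fin n) (Fin n) ℝ) (hA : A.PosSemidef) (h : ℕ)
    (hh : 2 ≤ A.rank →
      IsGreatest {k : ℕ | 0 < k ∧ ∃ s : Finset (Fin n), s.card = k ∧
        ∀ j₁ ∈ s, ∀ j₂ ∈ s, j₁ ≠ j₂ →
          LinearIndependent ℝ ![fun i => A i j₁, fun i => A i j₂]} h)
    (hh' : A.rank < 2 → h = A.rank) :
    ∀ d : ℕ, max (h - 1) 1 ≤ d → (Matrix.of fun i j => A i j ^ d).rank = h := by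
  intro d hd
  have hd1 : 1 ≤ d := le_trans (le_max_right _ _) hd
  obtain ⟨B, hB⟩ : ∃ B : Matrix (Fin n) (Fin n) ℝ, A = Bᴴ * B := by
    open scoped MatrixOrder in exact CStarAlgebra.nonneg_iff_eq_star_mul_self.mp hA.nonneg
  have hBt : Bᴴ = Bᵀ := by ext i j; simp [Matrix.conjTranspose_apply]
  rw [hBt] at hB
  set v : Fin n → Fin n → ℝ := fun j m => B m j with hv
  have hAij : ∀ i j, A i j = v i ⬝ᵥ v j := by
    intro i j
    rw [hB, Matrix.mul_apply]
    simp [dotProduct, Matrix.transpose_apply, hv]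
  set W : Matrix (Fin d → Fin n) (Fin n) ℝ := Matrix.of (fun f j => pw d (v j) f) with hW
  have hHad : (Matrix.of fun i j => A i j ^ d) = Wᵀ * W := by
    ext i j
    show A i j ^ d = ∑ f, Wᵀ i f * W f j
    rw [hAij]
    calc (v i ⬝ᵥ v j) ^ d = ∏ _k : Fin d, (∑ m, v i m * v j m) := by
          rw [Finset.prod_const, Finset.card_univ, Fintype.card_fin]; rfl
      _ = ∑ f : Fin d → Fin n, ∏ k, v i (f k) * v j (f k) := Fintype.prod_sum _
      _ = ∑ f : Fin d → Fin n, Wᵀ i f * W f j := by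
          refine Finset.sum_congr rfl fun f _ => ?_
          simp [hW, pw, Finset.prod_mul_distrib, Matrix.transpose_apply]
  have hrank : (Matrix.of fun i j => A i j ^ d).rank
      = finrank ℝ (span ℝ (Set.range fun j => pw d (v j))) := by
    rw [hHad, Matrix.rank_transpose_mul_self, Matrix.rank_eq_finrank_span_cols]
    congr 2
  have hrankA : A.rank = finrank ℝ (span ℝ (Set.range v)) := by
    rw [hB, Matrix.rank_transpose_mul_self, Matrix.rank_eq_finrank_span_cols]
    congr 2
  rw [hrank]
  -- translation between column independence and vector independence
  have hcol : ∀ j₁ j₂ : Fin n,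
      LinearIndependent ℝ ![fun i => A i j₁, fun i => A i j₂]
        ↔ LinearIndependent ℝ ![v j₁, v j₂] := by
    intro j₁ j₂
    rw [LinearIndependent.pair_iff, LinearIndependent.pair_iff]
    constructor
    · intro hcols a b hab
      apply hcols a b
      funext i
      have h0 : v i ⬝ᵥ (a • v j₁ + b • v j₂) = 0 := by rw [hab, dotProduct_zero]
      rw [dotProduct_add, dotProduct_smul, dotProduct_smul] at h0
      simpa [hAij, smul_eq_mul] using h0
    · intro hvs a b hab
      set y := a • v j₁ + b • v j₂ with hy
      have hyi : ∀ i, v i ⬝ᵥ y = 0 := by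
        intro i
        have hcf := congrFun hab i
        simp only [Pi.add_apply, Pi.smul_apply, smul_eq_mul, Pi.zero_apply] at hcf
        rw [hy, dotProduct_add, dotProduct_smul, dotProduct_smul]
        simpa [hAij, smul_eq_mul] using hcf
      have hyy : y ⬝ᵥ y = 0 := by
        have hexp : y ⬝ᵥ y = a * (v j₁ ⬝ᵥ y) + b * (v j₂ ⬝ᵥ y) := by
          rw [hy, add_dotProduct, smul_dotProduct, smul_dotProduct]; rfl
        rw [hexp, hyi, hyi]; ring
      exact hvs a b (dotProduct_self_eq_zero.mp hyy)
  by_cases hr2 : 2 ≤ A.rank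
  · -- main case
    obtain ⟨⟨hpos, s, hcard, hcols⟩, hub⟩ := hh hr2
    -- h ≥ 2
    have h2 : 2 ≤ h := by
      have hex : ∃ j₁ j₂ : Fin n, LinearIndependent ℝ ![v j₁, v j₂] := by
        by_contra hno
        push_neg at hno
        -- all pairs dependent ⇒ rank ≤ 1
        have hdep : ∀ j k : Fin n, v k ≠ 0 → ∃ c : ℝ, v j = c • v k := by
          intro j k hk
          have := hno j k
          rw [LinearIndependent.pair_iff] at this
          push_neg at this
          obtain ⟨a, b, hab, hnand⟩ := this
          by_cases ha : a = 0
          · exfalso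
            subst ha
            rw [zero_smul, zero_add] at hab
            have hb : b ≠ 0 := hnand rfl
            exact hk ((smul_eq_zero.mp hab).resolve_left hb)
          · refine ⟨-b / a, ?_⟩
            funext m
            have hm := congrFun hab m
            simp only [Pi.add_apply, Pi.smul_apply, smul_eq_mul, Pi.zero_apply] at hm
            simp only [Pi.smul_apply, smul_eq_mul]
            field_simp
            linarith
        by_cases hall : ∀ j, v j = 0
        · have : Submodule.span ℝ (Set.range v) = ⊥ :=
            Submodule.span_eq_bot.mpr (by rintro x ⟨j, rfl⟩; exact hall j)
          rw [hrankA, this, finrank_bot] at hr2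
          omega
        · push_neg at hall
          obtain ⟨j₀, hj₀⟩ := hall
          have hle : Submodule.span ℝ (Set.range v) ≤ Submodule.span ℝ {v j₀} := by
            rw [Submodule.span_le]
            rintro x ⟨j, rfl⟩
            obtain ⟨c, hc⟩ := hdep j j₀ hj₀
            rw [hc]
            exact Submodule.smul_mem _ _ (Submodule.mem_span_singleton_self _)
          have hfin : finrank ℝ (Submodule.span ℝ (Set.range v)) ≤ 1 := by
            calc finrank ℝ (Submodule.span ℝ (Set.range v))
                ≤ finrank ℝ (Submodule.span ℝ {v j₀}) := Submodule.finrank_mono hle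
              _ = 1 := finrank_span_singleton hj₀
          rw [hrankA] at hr2
          omega
      obtain ⟨j₁, j₂, hind⟩ := hex
      have hne : j₁ ≠ j₂ := by
        rintro rfl
        rw [LinearIndependent.pair_iff] at hind
        exact one_ne_zero (hind 1 (-1) (by rw [one_smul, neg_smul, one_smul,
          add_neg_cancel])).1
      refine hub ⟨by omega, {j₁, j₂}, ?_, ?_⟩
      · rw [Finset.card_insert_of_notMem (by simp [hne]), Finset.card_singleton]
      · intro x hx y hy hxy
        simp only [Finset.mem_insert, Finset.mem_singleton] at hx hy
        rcases hx with rfl | rfl <;> rcases hy with rfl | rfl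
        · exact absurd rfl hxy
        · exact (hcol _ _).mpr hind
        · exact (hcol _ _).mpr (pair_symm hind)
        · exact absurd rfl hxy
    -- basic facts about the witness set s
    have hvnz : ∀ j ∈ s, v j ≠ 0 := by
      intro j hj hzero
      obtain ⟨j', hj', hj'ne⟩ := Finset.exists_mem_ne
        (by omega : 1 < s.card) j
      have hind := (hcol j j').mp (hcols j hj j' hj' (Ne.symm hj'ne))
      rw [LinearIndependent.pair_iff] at hind
      exact one_ne_zero
        (hind 1 0 (by rw [hzero, smul_zero, zero_smul, add_zero])).1
    have hvpair : ∀ j₁ ∈ s, ∀ j₂ ∈ s, j₁ ≠ j₂ →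
        ∀ a b : ℝ, a • v j₁ + b • v j₂ = 0 → a = 0 ∧ b = 0 := by
      intro j₁ hj₁ j₂ hj₂ hne a b hab
      exact (LinearIndependent.pair_iff.mp
        ((hcol j₁ j₂).mp (hcols j₁ hj₁ j₂ hj₂ hne))) a b hab
    have hdmax : h - 1 ≤ d := le_trans (le_max_left _ _) hd
    have hcardle : s.card ≤ d + 1 := by omega
    -- lower bound
    have hli : LinearIndependent ℝ (fun (j : {x // x ∈ s}) => pw d (v ↑j)) := by
      rw [Fintype.linearIndependent_iff]
      intro g hg
      classical
      set c : Fin n → ℝ := fun j => if hj : j ∈ s then g ⟨j, hj⟩ else 0 with hc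
      have hsum : ∑ j ∈ s, c j • pw d (v j) = 0 := by
        rw [← Finset.sum_attach s (fun j => c j • pw d (v j)), ← hg]
        refine Finset.sum_congr rfl fun i _ => ?_
        simp [hc, i.2]
      intro i
      have := key s.card s d v c le_rfl hcardle hvnz hvpair hsum i.1 i.2
      simpa [hc, i.2] using this
    have hge : h ≤ finrank ℝ (span ℝ (Set.range fun j => pw d (v j))) := by
      have h1 := finrank_span_eq_card hli
      have hsub : span ℝ (Set.range fun (j : {x // x ∈ s}) => pw d (v ↑j))
          ≤ span ℝ (Set.range fun j => pw d (v j)) := by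
        apply Submodule.span_mono
        rintro x ⟨j, rfl⟩
        exact ⟨↑j, rfl⟩
      calc h = Fintype.card {x // x ∈ s} := by rw [Fintype.card_coe, hcard]
        _ = finrank ℝ (span ℝ (Set.range fun (j : {x // x ∈ s}) => pw d (v ↑j))) :=
            h1.symm
        _ ≤ _ := Submodule.finrank_mono hsub
    -- upper bound
    have hrep : ∀ j : Fin n, pw d (v j) ∈ span ℝ ((fun j => pw d (v j)) '' ↑s) := by
      intro j
      by_cases hvj : v j = 0
      · rw [hvj, pw_zero d hd1]; exact Submodule.zero_mem _
      · have hex : ∃ j' ∈ s, ∃ c : ℝ, v j = c • v j' := by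
          by_contra hnorep
          push_neg at hnorep
          have hjs : j ∉ s := fun hjmem => hnorep j hjmem 1 (by rw [one_smul])
          have hpairs : ∀ j' ∈ s, LinearIndependent ℝ ![v j', v j] := by
            intro j' hj'
            rw [LinearIndependent.pair_iff' (hvnz j' hj')]
            intro a ha
            exact hnorep j' hj' a ha.symm
          have hmem : h + 1 ∈ {k : ℕ | 0 < k ∧ ∃ s' : Finset (Fin n), s'.card = k ∧
              ∀ j₁ ∈ s', ∀ j₂ ∈ s', j₁ ≠ j₂ →
                LinearIndependent ℝ ![fun i => A i j₁, fun i => A i j₂]} := by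
            refine ⟨by omega, insert j s,
              by rw [Finset.card_insert_of_notMem hjs, hcard], ?_⟩
            intro x hx y hy hxy
            rcases Finset.mem_insert.mp hx with rfl | hx' <;>
              rcases Finset.mem_insert.mp hy with rfl | hy'
            · exact absurd rfl hxy
            · exact (hcol _ _).mpr (pair_symm (hpairs y hy'))
            · exact (hcol _ _).mpr (hpairs x hx')
            · exact hcols x hx' y hy' hxy
          have := hub hmem
          omega
        obtain ⟨j', hj', c, hcc⟩ := hex
        rw [hcc, pw_smul]
        exact Submodule.smul_mem _ _ (Submodule.subset_span ⟨j', hj', rfl⟩)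
    have hle : finrank ℝ (span ℝ (Set.range fun j => pw d (v j))) ≤ h := by
      have hsple : span ℝ (Set.range fun j => pw d (v j))
          ≤ span ℝ ((fun j => pw d (v j)) '' ↑s) := by
        rw [Submodule.span_le]
        rintro x ⟨j, rfl⟩
        exact hrep j
      calc finrank ℝ (span ℝ (Set.range fun j => pw d (v j)))
          ≤ finrank ℝ (span ℝ ((fun j => pw d (v j)) '' ↑s)) :=
            Submodule.finrank_mono hsple
        _ ≤ (s.image (fun j => pw d (v j))).card := by
            rw [← Finset.coe_image]
            exact finrank_span_finset_le_card _
        _ ≤ s.card := Finset.card_image_le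
        _ = h := hcard
    omega
  · -- degenerate case: rank A < 2
    push_neg at hr2
    have hAr := hh' hr2
    have hcases : A.rank = 0 ∨ A.rank = 1 := by omega
    rcases hcases with h0 | h1
    · rw [hAr, h0]
      have hbot : span ℝ (Set.range v) = ⊥ := by
        rw [hrankA] at h0
        exact Submodule.finrank_eq_zero.mp h0
      have hallz : ∀ j, v j = 0 := fun j => by
        have hm : v j ∈ span ℝ (Set.range v) := Submodule.subset_span ⟨j, rfl⟩
        rw [hbot] at hm; simpa using hm
      have hbot2 : span ℝ (Set.range fun j => pw d (v j)) = ⊥ :=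
        Submodule.span_eq_bot.mpr
          (by rintro x ⟨j, rfl⟩; show pw d (v j) = 0; rw [hallz j, pw_zero d hd1])
      rw [hbot2, finrank_bot]
    · rw [hAr, h1]
      have hfr1 : finrank ℝ (span ℝ (Set.range v)) = 1 := by rw [← hrankA]; exact h1
      obtain ⟨j₀, hj₀⟩ : ∃ j₀, v j₀ ≠ 0 := by
        by_contra hc; push_neg at hc
        have hbot : span ℝ (Set.range v) = ⊥ :=
          Submodule.span_eq_bot.mpr (by rintro x ⟨j, rfl⟩; exact hc j)
        rw [hbot, finrank_bot] at hfr1; omega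
      have hco : ∀ j, ∃ c : ℝ, v j = c • v j₀ := by
        intro j
        have hspan_eq : span ℝ {v j₀} = span ℝ (Set.range v) := by
          apply Submodule.eq_of_le_of_finrank_le
          · exact Submodule.span_mono (Set.singleton_subset_iff.mpr ⟨j₀, rfl⟩)
          · rw [hfr1, finrank_span_singleton hj₀]
        have hm : v j ∈ span ℝ {v j₀} := by
          rw [hspan_eq]; exact Submodule.subset_span ⟨j, rfl⟩
        obtain ⟨c, hc⟩ := Submodule.mem_span_singleton.mp hm
        exact ⟨c, hc.symm⟩
      apply le_antisymm
      · have hsple : span ℝ (Set.range fun j => pw d (v j)) ≤ span ℝ {pw d (v j₀)} := by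
          rw [Submodule.span_le]
          rintro x ⟨j, rfl⟩
          obtain ⟨c, hc⟩ := hco j
          simp only
          rw [hc, pw_smul]
          exact Submodule.smul_mem _ _ (Submodule.mem_span_singleton_self _)
        calc finrank ℝ (span ℝ (Set.range fun j => pw d (v j)))
            ≤ finrank ℝ (span ℝ {pw d (v j₀)}) := Submodule.finrank_mono hsple
          _ = 1 := finrank_span_singleton (pw_ne_zero d hj₀)
      · rw [Nat.one_le_iff_ne_zero]
        intro hzero
        have hbot : span ℝ (Set.range fun j => pw d (v j)) = ⊥ :=
          Submodule.finrank_eq_zero.mp hzero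
        refine pw_ne_zero d hj₀ ?_
        have hmem : pw d (v j₀) ∈ span ℝ (Set.range fun j => pw d (v j)) :=
          Submodule.subset_span ⟨j₀, rfl⟩
        rw [hbot] at hmem
        simpa using hmem
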